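/- Let H and L be real Hilbert spaces, Φ : H → L a bounded linear operator with adjoint Φ*, A ⊆ H a nonempty symmetric set (x ∈ A implies −x ∈ A), y ∈ L, μ > 0 and α > 0. Assume for all x₁, x₂ ∈ A: α‖x₁ + x₂‖² ≤ ‖Φ(x₁ + x₂)‖² ≤ (1/μ)‖x₁ + x₂‖². Let xⁿ ∈ A and let xⁿ⁺¹ ∈ A be a best approximation in A to xⁿ + μΦ*(y − Φxⁿ). Then for every x_A ∈ A: ‖x_A − xⁿ⁺¹‖² ≤ 2·(1/(μα) − 1)·‖x_A − xⁿ‖² + (4/α)·‖y − Φx_A‖². -/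

import Mathlib

lemma stmt_6_aux
    {H L : Type*} [NormedAddCommGroup H] [InnerProductSpace ℝ H] [CompleteSpace H]
    [NormedAddCommGroup L] [InnerProductSpace ℝ L] [CompleteSpace L]
    (Φ : H →L[ℝ] L) (w : L) (u : H) (μ : ℝ) (hμ : μ ≠ 0) :
    ‖w - Φ u‖ ^ 2 + (1 / μ) * ‖u‖ ^ 2 - ‖Φ u‖ ^ 2
      = (1 / μ) * ‖u - μ • (ContinuousLinearMap.adjoint Φ) w‖ ^ 2
        + (‖w‖ ^ 2 - μ * ‖(ContinuousLinearMap.adjoint Φ) w‖ ^ 2) := by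
  rw [norm_sub_sq_real, norm_sub_sq_real]
  have hadj : (inner ℝ u (μ • (ContinuousLinearMap.adjoint Φ) w) : ℝ)
      = μ * (inner ℝ w (Φ u) : ℝ) := by
    rw [real_inner_smul_right, real_inner_comm, ContinuousLinearMap.adjoint_inner_left]
  rw [hadj]
  have hns : ‖μ • (ContinuousLinearMap.adjoint Φ) w‖ ^ 2
      = μ ^ 2 * ‖(ContinuousLinearMap.adjoint Φ) w‖ ^ 2 := by
    rw [norm_smul, mul_pow, Real.norm_eq_abs, sq_abs]
  rw [hns]
  field_simp
  ring

/-- error contraction after one Iterative Projection Algorithm step. -/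
theorem stmt_6
    {H L : Type*} [NormedAddCommGroup H] [InnerProductSpace ℝ H] [CompleteSpace H]
    [NormedAddCommGroup L] [InnerProductSpace ℝ L] [CompleteSpace L]
    (Φ : H →L[ℝ] L) (A : Set H) (hA : A.Nonempty)
    (hsym : ∀ x ∈ A, -x ∈ A)
    (y : L) (μ α : ℝ) (hμ : 0 < μ) (hα : 0 < α)
    (hbi : ∀ x₁ ∈ A, ∀ x₂ ∈ A,
      α * ‖x₁ + x₂‖ ^ 2 ≤ ‖Φ (x₁ + x₂)‖ ^ 2 ∧ ‖Φ (x₁ + x₂)‖ ^ 2 ≤ (1 / μ) * ‖x₁ + x₂‖ ^ 2)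
    (xn : H) (hxn : xn ∈ A)
    (xn1 : H) (hxn1 : xn1 ∈ A)
    (hproj : ∀ z ∈ A,
      ‖xn1 - (xn + μ • (ContinuousLinearMap.adjoint Φ) (y - Φ xn))‖ ≤
      ‖z - (xn + μ • (ContinuousLinearMap.adjoint Φ) (y - Φ xn))‖) :
    ∀ xA ∈ A,
      ‖xA - xn1‖ ^ 2 ≤ 2 * (1 / (μ * α) - 1) * ‖xA - xn‖ ^ 2 + (4 / α) * ‖y - Φ xA‖ ^ 2 := by
  intro xA hxA
  have hμ' : μ ≠ 0 := ne_of_gt hμ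
  have hα' : α ≠ 0 := ne_of_gt hα
  -- bi-Lipschitz on differences
  have key : ∀ a ∈ A, ∀ b ∈ A,
      α * ‖a - b‖ ^ 2 ≤ ‖Φ (a - b)‖ ^ 2 ∧ ‖Φ (a - b)‖ ^ 2 ≤ (1 / μ) * ‖a - b‖ ^ 2 := by
    intro a ha b hb
    have := hbi a ha (-b) (hsym b hb)
    simpa [sub_eq_add_neg] using this
  -- surrogate-cost identity
  have ident : ∀ z : H,
      ‖y - Φ z‖ ^ 2 + (1 / μ) * ‖z - xn‖ ^ 2 - ‖Φ (z - xn)‖ ^ 2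
        = (1 / μ) * ‖z - (xn + μ • (ContinuousLinearMap.adjoint Φ) (y - Φ xn))‖ ^ 2
          + (‖y - Φ xn‖ ^ 2 - μ * ‖(ContinuousLinearMap.adjoint Φ) (y - Φ xn)‖ ^ 2) := by
    intro z
    have h1 : y - Φ z = (y - Φ xn) - Φ (z - xn) := by
      simp only [map_sub]; abel
    have h2 : z - (xn + μ • (ContinuousLinearMap.adjoint Φ) (y - Φ xn))
        = (z - xn) - μ • (ContinuousLinearMap.adjoint Φ) (y - Φ xn) := by abel
    rw [h1, h2]
    exact stmt_6_aux Φ (y - Φ xn) (z - xn) μ hμ'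
  -- projection gives decrease of surrogate cost
  have hpr := hproj xA hxA
  have hpr2 : ‖xn1 - (xn + μ • (ContinuousLinearMap.adjoint Φ) (y - Φ xn))‖ ^ 2
      ≤ ‖xA - (xn + μ • (ContinuousLinearMap.adjoint Φ) (y - Φ xn))‖ ^ 2 :=
    pow_le_pow_left₀ (norm_nonneg _) hpr 2
  have hC : ‖y - Φ xn1‖ ^ 2 + (1 / μ) * ‖xn1 - xn‖ ^ 2 - ‖Φ (xn1 - xn)‖ ^ 2
      ≤ ‖y - Φ xA‖ ^ 2 + (1 / μ) * ‖xA - xn‖ ^ 2 - ‖Φ (xA - xn)‖ ^ 2 := by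
    rw [ident xn1, ident xA]
    have hμinv : (0:ℝ) < 1 / μ := by positivity
    nlinarith [hpr2]
  -- bi-Lipschitz bounds
  have k1 : α * ‖xA - xn‖ ^ 2 ≤ ‖Φ (xA - xn)‖ ^ 2 := (key xA hxA xn hxn).1
  have k2 : ‖Φ (xn1 - xn)‖ ^ 2 ≤ (1 / μ) * ‖xn1 - xn‖ ^ 2 := (key xn1 hxn1 xn hxn).2
  have k3 : α * ‖xA - xn1‖ ^ 2 ≤ ‖Φ (xA - xn1)‖ ^ 2 := (key xA hxA xn1 hxn1).1
  -- triangle-type bound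
  have htri : ‖Φ (xA - xn1)‖ ≤ ‖y - Φ xn1‖ + ‖y - Φ xA‖ := by
    have heq : Φ (xA - xn1) = (y - Φ xn1) - (y - Φ xA) := by
      simp only [map_sub]; abel
    rw [heq]
    exact norm_sub_le _ _
  have k4 : ‖Φ (xA - xn1)‖ ^ 2 ≤ 2 * ‖y - Φ xn1‖ ^ 2 + 2 * ‖y - Φ xA‖ ^ 2 := by
    nlinarith [sq_nonneg (‖y - Φ xn1‖ - ‖y - Φ xA‖), norm_nonneg (Φ (xA - xn1)),
      norm_nonneg (y - Φ xn1), norm_nonneg (y - Φ xA), htri]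
  -- combine
  have hmain : α * ‖xA - xn1‖ ^ 2
      ≤ 2 * (1 / μ - α) * ‖xA - xn‖ ^ 2 + 4 * ‖y - Φ xA‖ ^ 2 := by
    nlinarith [hC, k1, k2, k3, k4]
  have hres : α * ‖xA - xn1‖ ^ 2
      ≤ α * (2 * (1 / (μ * α) - 1) * ‖xA - xn‖ ^ 2 + (4 / α) * ‖y - Φ xA‖ ^ 2) := by
    have heq : α * (2 * (1 / (μ * α) - 1) * ‖xA - xn‖ ^ 2 + (4 / α) * ‖y - Φ xA‖ ^ 2)
        = 2 * (1 / μ - α) * ‖xA - xn‖ ^ 2 + 4 * ‖y - Φ xA‖ ^ 2 := by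
      field_simp
    rw [heq]
    exact hmain
  exact le_of_mul_le_mul_left hres hα
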